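/- Let L be a Moufang loop of class at most 2. Then for all c, d, κ ∈ L, the κ-isotope product satisfies (cκ)(κ⁻¹d) = (cd)·[c,κ,d]. -/
import Mathlib


/-- An inverse property loop: a set with multiplication, identity, and two-sided
inverses satisfying `a⁻¹(ax) = x = (xa)a⁻¹`. -/
class IPLoop (L : Type*) extends Mul L, One L, Inv L where
  one_mul : ∀ a : L, 1 * a = a
  mul_one : ∀ a : L, a * 1 = a
  inv_mul_cancel_left : ∀ a x : L, a⁻¹ * (a * x) = x
  mul_inv_cancel_right : ∀ a x : L, (x * a) * a⁻¹ = x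

namespace IPLoop

variable {L : Type*} [IPLoop L]

/-- Powers with natural number exponent, `c^(n+1) = c * c^n`. -/
def npow (c : L) : ℕ → L
  | 0 => 1
  | n + 1 => c * npow c n

instance : Pow L ℕ := ⟨npow⟩

/-- Powers with integer exponent. -/
def zpow (c : L) : ℤ → L
  | Int.ofNat n => c ^ n
  | Int.negSucc n => (c ^ (n + 1))⁻¹

instance : Pow L ℤ := ⟨zpow⟩

/-- The commutator `[c,d] = (dc)⁻¹(cd)`. -/
def comm (c d : L) : L := (d * c)⁻¹ * (c * d)

/-- The associator `[c,d,e] = (c(de))⁻¹((cd)e)`. -/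
def assoc (c d e : L) : L := (c * (d * e))⁻¹ * ((c * d) * e)

/-- Membership in the center `Z(L)`. -/
def inCenter (z : L) : Prop :=
  (∀ x : L, comm z x = 1) ∧
  ∀ x y : L, assoc z x y = 1 ∧ assoc x z y = 1 ∧ assoc x y z = 1

/-- The Moufang identity `((dc)e)c = d(c(ec))`. -/
def IsMoufang (L : Type*) [IPLoop L] : Prop :=
  ∀ c d e : L, ((d * c) * e) * c = d * (c * (e * c))

/-- A loop is of (central nilpotence) class at most 2 if every commutator and
every associator lies in the center. -/
def ClassTwo (L : Type*) [IPLoop L] : Prop :=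
  (∀ c d : L, inCenter (comm c d)) ∧ ∀ c d e : L, inCenter (assoc c d e)

/-- The order of an element: least `n > 0` with `c^n = 1` (or `0` if none). -/
noncomputable def ordOf (c : L) : ℕ := sInf {n : ℕ | 0 < n ∧ c ^ n = 1}

/-- The subloop generated by a subset `S`. -/
def subloopClosure (S : Set L) : Set L :=
  ⋂₀ {T : Set L | (1 : L) ∈ T ∧ (∀ x ∈ T, x⁻¹ ∈ T) ∧
      (∀ x ∈ T, ∀ y ∈ T, x * y ∈ T) ∧ S ⊆ T}

end IPLoop

namespace IPLoop

variable {L : Type*} [IPLoop L]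

lemma mul_inv (a : L) : a * a⁻¹ = 1 := by
  have h := mul_inv_cancel_right a (1 : L); rwa [one_mul] at h

lemma inv_mul (a : L) : a⁻¹ * a = 1 := by
  have h := inv_mul_cancel_left a (1 : L); rwa [mul_one] at h

lemma inv_inv' (a : L) : a⁻¹⁻¹ = a := by
  have h := inv_mul_cancel_left a⁻¹ a
  rwa [inv_mul, mul_one] at h

lemma mul_left_cancel' {a b c : L} (h : a * b = a * c) : b = c := by
  have h1 := inv_mul_cancel_left a b
  rw [h, inv_mul_cancel_left] at h1
  exact h1.symm

lemma mul_right_cancel' {a b c : L} (h : b * a = c * a) : b = c := by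
  have h1 := mul_inv_cancel_right a b
  rw [h, mul_inv_cancel_right] at h1
  exact h1.symm

lemma mul_inv_cancel_right' (a x : L) : (x * a⁻¹) * a = x := by
  have h := mul_inv_cancel_right a⁻¹ x; rwa [inv_inv'] at h

lemma inv_mul_cancel_left' (a x : L) : a * (a⁻¹ * x) = x := by
  have h := inv_mul_cancel_left a⁻¹ x; rwa [inv_inv'] at h

lemma eq_of_inv_mul_eq_one {u v : L} (h : u⁻¹ * v = 1) : v = u := by
  have h1 := inv_mul_cancel_left' u v
  rw [h, mul_one] at h1
  exact h1.symm

lemma mul_inv_rev' (x y : L) : (x * y)⁻¹ = y⁻¹ * x⁻¹ := by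
  have h1 := inv_mul_cancel_left (x * y) y⁻¹
  rw [mul_inv_cancel_right] at h1
  have h2 := mul_inv_cancel_right x ((x * y)⁻¹)
  rw [h1] at h2
  exact h2.symm

/-! ### Central elements -/

lemma cen_comm {z : L} (hz : inCenter z) (x : L) : z * x = x * z :=
  eq_of_inv_mul_eq_one (hz.1 x)

lemma cen_a1 {z : L} (hz : inCenter z) (x y : L) : (z * x) * y = z * (x * y) :=
  eq_of_inv_mul_eq_one (hz.2 x y).1

lemma cen_a2 {z : L} (hz : inCenter z) (x y : L) : (x * z) * y = x * (z * y) :=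
  eq_of_inv_mul_eq_one (hz.2 x y).2.1

lemma cen_a3 {z : L} (hz : inCenter z) (x y : L) : (x * y) * z = x * (y * z) :=
  eq_of_inv_mul_eq_one (hz.2 x y).2.2

lemma inCenter_mk (z : L) (hc : ∀ x : L, z * x = x * z)
    (ha1 : ∀ x y : L, (z * x) * y = z * (x * y))
    (ha2 : ∀ x y : L, (x * z) * y = x * (z * y))
    (ha3 : ∀ x y : L, (x * y) * z = x * (y * z)) : inCenter z := by
  constructor
  · intro x
    show (x * z)⁻¹ * (z * x) = 1
    rw [hc x]; exact inv_mul _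
  · intro x y
    refine ⟨?_, ?_, ?_⟩
    · show (z * (x * y))⁻¹ * ((z * x) * y) = 1
      rw [ha1 x y]; exact inv_mul _
    · show (x * (z * y))⁻¹ * ((x * z) * y) = 1
      rw [ha2 x y]; exact inv_mul _
    · show (x * (y * z))⁻¹ * ((x * y) * z) = 1
      rw [ha3 x y]; exact inv_mul _

lemma inCenter_one : inCenter (1 : L) := by
  apply inCenter_mk
  · intro x; rw [one_mul, mul_one]
  · intro x y; rw [one_mul, one_mul]
  · intro x y; rw [mul_one, one_mul]
  · intro x y; rw [mul_one, mul_one]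

lemma inCenter.inv {z : L} (hz : inCenter z) : inCenter z⁻¹ := by
  have hc : ∀ x : L, z⁻¹ * x = x * z⁻¹ := by
    intro x
    apply mul_left_cancel' (a := z)
    calc z * (z⁻¹ * x) = x := inv_mul_cancel_left' z x
      _ = (x * z) * z⁻¹ := (mul_inv_cancel_right z x).symm
      _ = (z * x) * z⁻¹ := by rw [← cen_comm hz x]
      _ = z * (x * z⁻¹) := cen_a1 hz x z⁻¹
  have ha3 : ∀ x y : L, (x * y) * z⁻¹ = x * (y * z⁻¹) := by
    intro x y
    apply mul_right_cancel' (a := z)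
    calc ((x * y) * z⁻¹) * z = x * y := mul_inv_cancel_right' z (x * y)
      _ = x * ((y * z⁻¹) * z) := by rw [mul_inv_cancel_right' z y]
      _ = (x * (y * z⁻¹)) * z := (cen_a3 hz x (y * z⁻¹)).symm
  have ha1 : ∀ x y : L, (z⁻¹ * x) * y = z⁻¹ * (x * y) := by
    intro x y
    apply mul_left_cancel' (a := z)
    calc z * ((z⁻¹ * x) * y) = (z * (z⁻¹ * x)) * y := (cen_a1 hz (z⁻¹ * x) y).symm
      _ = x * y := by rw [inv_mul_cancel_left' z x]
      _ = z * (z⁻¹ * (x * y)) := (inv_mul_cancel_left' z (x * y)).symm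
  have ha2 : ∀ x y : L, (x * z⁻¹) * y = x * (z⁻¹ * y) := by
    intro x y
    calc (x * z⁻¹) * y = (z⁻¹ * x) * y := by rw [← hc x]
      _ = z⁻¹ * (x * y) := ha1 x y
      _ = (x * y) * z⁻¹ := hc (x * y)
      _ = x * (y * z⁻¹) := ha3 x y
      _ = x * (z⁻¹ * y) := by rw [← hc y]
  exact inCenter_mk z⁻¹ hc ha1 ha2 ha3

lemma inCenter.mul {z t : L} (hz : inCenter z) (ht : inCenter t) : inCenter (z * t) := by
  have hc : ∀ x : L, (z * t) * x = x * (z * t) := by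
    intro x
    calc (z * t) * x = z * (t * x) := cen_a1 hz t x
      _ = z * (x * t) := by rw [cen_comm ht x]
      _ = (z * x) * t := (cen_a1 hz x t).symm
      _ = (x * z) * t := by rw [cen_comm hz x]
      _ = x * (z * t) := cen_a3 ht x z
  have ha1 : ∀ x y : L, ((z * t) * x) * y = (z * t) * (x * y) := by
    intro x y
    calc ((z * t) * x) * y = (z * (t * x)) * y := by rw [cen_a1 hz t x]
      _ = z * ((t * x) * y) := cen_a1 hz (t * x) y
      _ = z * (t * (x * y)) := by rw [cen_a1 ht x y]
      _ = (z * t) * (x * y) := (cen_a1 hz t (x * y)).symm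
  have ha2 : ∀ x y : L, (x * (z * t)) * y = x * ((z * t) * y) := by
    intro x y
    calc (x * (z * t)) * y = ((x * z) * t) * y := by rw [← cen_a3 ht x z]
      _ = (x * z) * (t * y) := cen_a2 ht (x * z) y
      _ = x * (z * (t * y)) := cen_a2 hz x (t * y)
      _ = x * ((z * t) * y) := by rw [cen_a1 hz t y]
  have ha3 : ∀ x y : L, (x * y) * (z * t) = x * (y * (z * t)) := by
    intro x y
    calc (x * y) * (z * t) = ((x * y) * z) * t := (cen_a3 ht (x * y) z).symm
      _ = (x * (y * z)) * t := by rw [cen_a3 hz x y]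
      _ = x * ((y * z) * t) := cen_a3 ht x (y * z)
      _ = x * (y * (z * t)) := by rw [cen_a3 ht y z]
  exact inCenter_mk (z * t) hc ha1 ha2 ha3

lemma cen_slide {ζ : L} (hζ : inCenter ζ) (u v : L) : (u * ζ) * v = (u * v) * ζ := by
  calc (u * ζ) * v = u * (ζ * v) := cen_a2 hζ u v
    _ = u * (v * ζ) := by rw [cen_comm hζ v]
    _ = (u * v) * ζ := (cen_a3 hζ u v).symm

lemma cen_conj {ζ : L} (hζ : inCenter ζ) (u v : L) : (u * ζ)⁻¹ * (v * ζ) = u⁻¹ * v := by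
  rw [mul_inv_rev']
  rw [cen_comm hζ.inv u⁻¹]
  rw [cen_a2 hζ.inv u⁻¹ (v * ζ)]
  rw [← cen_comm hζ v]
  rw [inv_mul_cancel_left]

/-! ### Associator basics -/

lemma mul_mul_assoc (p q r : L) : (p * q) * r = (p * (q * r)) * assoc p q r := by
  show (p * q) * r = (p * (q * r)) * ((p * (q * r))⁻¹ * ((p * q) * r))
  exact (inv_mul_cancel_left' _ _).symm

lemma mul_assoc_inv (p q r : L) : p * (q * r) = ((p * q) * r) * (assoc p q r)⁻¹ := by
  conv_rhs => rw [mul_mul_assoc p q r]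
  rw [mul_inv_cancel_right]

lemma assoc_cen2 {ζ : L} (hζ : inCenter ζ) (p q r : L) :
    assoc p (q * ζ) r = assoc p q r := by
  show (p * ((q * ζ) * r))⁻¹ * ((p * (q * ζ)) * r) = assoc p q r
  rw [cen_slide hζ q r]
  rw [← cen_a3 hζ p (q * r)]
  rw [← cen_a3 hζ p q]
  rw [cen_slide hζ (p * q) r]
  rw [cen_conj hζ]
  rfl

/-! ### The central-difference relation -/

def CRel (u v : L) : Prop := ∃ z : L, inCenter z ∧ v = u * z

lemma crel_of_eq {u v : L} (h : u = v) : CRel u v :=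
  ⟨1, inCenter_one, by rw [h, mul_one]⟩

lemma crel_symm {u v : L} (h : CRel u v) : CRel v u := by
  obtain ⟨z, hz, he⟩ := h
  exact ⟨z⁻¹, hz.inv, by rw [he, mul_inv_cancel_right]⟩

lemma crel_trans {u v w : L} (h1 : CRel u v) (h2 : CRel v w) : CRel u w := by
  obtain ⟨z, hz, he⟩ := h1
  obtain ⟨t, ht, hf⟩ := h2
  exact ⟨z * t, hz.mul ht, by rw [hf, he, cen_a3 ht]⟩

lemma crel_mul_left {u v : L} (w : L) (h : CRel u v) : CRel (w * u) (w * v) := by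
  obtain ⟨z, hz, he⟩ := h
  exact ⟨z, hz, by rw [he, ← cen_a3 hz]⟩

lemma crel_mul_right {u v : L} (w : L) (h : CRel u v) : CRel (u * w) (v * w) := by
  obtain ⟨z, hz, he⟩ := h
  exact ⟨z, hz, by rw [he, cen_slide hz]⟩

lemma crel_swap (h2 : ClassTwo L) (u v : L) : CRel (u * v) (v * u) :=
  ⟨comm v u, h2.1 v u, (inv_mul_cancel_left' (u * v) (v * u)).symm⟩

lemma crel_assoc (h2 : ClassTwo L) (u v w : L) : CRel ((u * v) * w) (u * (v * w)) :=
  ⟨(assoc u v w)⁻¹, (h2.2 u v w).inv, mul_assoc_inv u v w⟩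

lemma assoc_congr2 {q q' : L} (h : CRel q q') (p r : L) :
    assoc p q' r = assoc p q r := by
  obtain ⟨z, hz, he⟩ := h
  rw [he]
  exact assoc_cen2 hz p q r

/-! ### Moufang consequences -/

lemma flex (hM : IsMoufang L) (c e : L) : (c * e) * c = c * (e * c) := by
  have h := hM c 1 e
  rwa [one_mul, one_mul] at h

lemma lMouf (hM : IsMoufang L) (a b c : L) : a * (b * (a * c)) = ((a * b) * a) * c := by
  have h := hM a⁻¹ c⁻¹ b⁻¹
  have h2 := congrArg (fun t : L => t⁻¹) h
  simp only [mul_inv_rev', inv_inv'] at h2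
  exact h2

lemma Rm (hM : IsMoufang L) (h2 : ClassTwo L) (p q r : L) :
    assoc p (q * r) q = (assoc p q r)⁻¹ := by
  have hAi : inCenter (assoc p q r)⁻¹ := (h2.2 p q r).inv
  have key : ((p * q) * r) * q =
      ((((p * q) * r) * q) * (assoc p q r)⁻¹) * (assoc p (q * r) q)⁻¹ := by
    calc ((p * q) * r) * q = p * (q * (r * q)) := hM q p r
      _ = p * ((q * r) * q) := by rw [flex hM q r]
      _ = ((p * (q * r)) * q) * (assoc p (q * r) q)⁻¹ := mul_assoc_inv p (q * r) q
      _ = ((((p * q) * r) * (assoc p q r)⁻¹) * q) * (assoc p (q * r) q)⁻¹ := by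
          rw [mul_assoc_inv p q r]
      _ = ((((p * q) * r) * q) * (assoc p q r)⁻¹) * (assoc p (q * r) q)⁻¹ := by
          rw [cen_slide hAi ((p * q) * r) q]
  have key2 : (((p * q) * r) * q) * (assoc p (q * r) q)
      = (((p * q) * r) * q) * (assoc p q r)⁻¹ := by
    calc (((p * q) * r) * q) * (assoc p (q * r) q)
        = ((((((p * q) * r) * q) * (assoc p q r)⁻¹) * (assoc p (q * r) q)⁻¹))
            * (assoc p (q * r) q) := by rw [← key]
      _ = (((p * q) * r) * q) * (assoc p q r)⁻¹ := mul_inv_cancel_right' _ _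
  exact mul_left_cancel' key2

lemma Lm (hM : IsMoufang L) (h2 : ClassTwo L) (p q r : L) :
    assoc q (p * q) r = (assoc p q r)⁻¹ := by
  have hAi : inCenter (assoc p q r)⁻¹ := (h2.2 p q r).inv
  have key : ((q * p) * q) * r =
      ((((q * p) * q) * r) * (assoc q (p * q) r)⁻¹) * (assoc p q r)⁻¹ := by
    calc ((q * p) * q) * r = q * (p * (q * r)) := (lMouf hM q p r).symm
      _ = q * (((p * q) * r) * (assoc p q r)⁻¹) := by rw [mul_assoc_inv p q r]
      _ = (q * ((p * q) * r)) * (assoc p q r)⁻¹ := (cen_a3 hAi q ((p * q) * r)).symm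
      _ = (((q * (p * q)) * r) * (assoc q (p * q) r)⁻¹) * (assoc p q r)⁻¹ := by
          rw [mul_assoc_inv q (p * q) r]
      _ = ((((q * p) * q) * r) * (assoc q (p * q) r)⁻¹) * (assoc p q r)⁻¹ := by
          rw [← flex hM q p]
  have key2 : (((q * p) * q) * r) * (assoc p q r)
      = (((q * p) * q) * r) * (assoc q (p * q) r)⁻¹ := by
    calc (((q * p) * q) * r) * (assoc p q r)
        = (((((q * p) * q) * r) * (assoc q (p * q) r)⁻¹) * (assoc p q r)⁻¹)
            * (assoc p q r) := by rw [← key]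
      _ = (((q * p) * q) * r) * (assoc q (p * q) r)⁻¹ := mul_inv_cancel_right' _ _
  have h6 := mul_left_cancel' key2
  rw [h6, inv_inv']

/-! ### The key absorption lemma -/

lemma assoc_absorb (hM : IsMoufang L) (h2 : ClassTwo L) (x y z : L) :
    assoc x y (y * z) = assoc x y z := by
  have s2 : CRel (x * y) ((y * z) * (x * z⁻¹)) := by
    apply crel_symm
    refine crel_trans (crel_symm (crel_assoc h2 (y * z) x z⁻¹)) ?_
    refine crel_trans (crel_mul_right z⁻¹ (crel_symm (crel_swap h2 x (y * z)))) ?_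
    refine crel_trans (crel_mul_right z⁻¹ (crel_symm (crel_assoc h2 x y z))) ?_
    exact crel_of_eq (mul_inv_cancel_right z (x * y))
  have s4 : CRel ((x * y) * z⁻¹) (y * (x * z⁻¹)) := by
    apply crel_symm
    refine crel_trans (crel_symm (crel_assoc h2 y x z⁻¹)) ?_
    exact crel_mul_right z⁻¹ (crel_swap h2 y x)
  have s5base : CRel (z * ((x * y) * z⁻¹)) (x * y) := by
    refine crel_trans (crel_symm (crel_swap h2 ((x * y) * z⁻¹) z)) ?_
    exact crel_of_eq (mul_inv_cancel_right' z (x * y))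
  have s5 : CRel (x * y) (z * ((x * y) * z⁻¹)) := crel_symm s5base
  have s7 : CRel y ((x⁻¹ * z) * ((x * y) * z⁻¹)) := by
    apply crel_symm
    refine crel_trans (crel_assoc h2 x⁻¹ z ((x * y) * z⁻¹)) ?_
    refine crel_trans (crel_mul_left x⁻¹ s5base) ?_
    exact crel_of_eq (inv_mul_cancel_left x y)
  have s9 : CRel z ((x⁻¹ * z) * x) := by
    apply crel_symm
    refine crel_trans (crel_assoc h2 x⁻¹ z x) ?_
    refine crel_trans (crel_mul_left x⁻¹ (crel_symm (crel_swap h2 x z))) ?_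
    exact crel_of_eq (inv_mul_cancel_left x z)
  have s10 : CRel y (z * (y * z⁻¹)) := by
    apply crel_symm
    refine crel_trans (crel_symm (crel_assoc h2 z y z⁻¹)) ?_
    refine crel_trans (crel_mul_right z⁻¹ (crel_swap h2 z y)) ?_
    exact crel_of_eq (mul_inv_cancel_right z y)
  have e1 : assoc x y (y * z) = (assoc y (x * y) (y * z))⁻¹ := by
    have h := Lm hM h2 x y (y * z)
    rw [h, inv_inv']
  have e2 : assoc y (x * y) (y * z) = (assoc y (y * z) (x * z⁻¹))⁻¹ := by
    have h := Rm hM h2 y (y * z) (x * z⁻¹)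
    rwa [assoc_congr2 s2 y (y * z)] at h
  have e3 : assoc y (y * z) (x * z⁻¹) = (assoc z y (x * z⁻¹))⁻¹ := by
    have h := Lm hM h2 z y (x * z⁻¹)
    rwa [assoc_congr2 (crel_swap h2 y z) y (x * z⁻¹)] at h
  have e4 : assoc z y (x * z⁻¹) = (assoc z ((x * y) * z⁻¹) y)⁻¹ := by
    have h := Rm hM h2 z y (x * z⁻¹)
    rw [assoc_congr2 s4 z y] at h
    rw [h, inv_inv']
  have e5 : assoc z ((x * y) * z⁻¹) y = (assoc ((x * y) * z⁻¹) (x * y) y)⁻¹ := by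
    have h := Lm hM h2 z ((x * y) * z⁻¹) y
    rw [assoc_congr2 s5 ((x * y) * z⁻¹) y] at h
    rw [h, inv_inv']
  have e6 : assoc ((x * y) * z⁻¹) (x * y) y = (assoc ((x * y) * z⁻¹) y x)⁻¹ := by
    have h := Rm hM h2 ((x * y) * z⁻¹) y x
    rwa [assoc_congr2 (crel_swap h2 x y) ((x * y) * z⁻¹) y] at h
  have e7 : assoc ((x * y) * z⁻¹) y x = (assoc (x⁻¹ * z) ((x * y) * z⁻¹) x)⁻¹ := by
    have h := Lm hM h2 (x⁻¹ * z) ((x * y) * z⁻¹) x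
    rwa [assoc_congr2 s7 ((x * y) * z⁻¹) x] at h
  have e8 : assoc (x⁻¹ * z) ((x * y) * z⁻¹) x = (assoc (x⁻¹ * z) x (y * z⁻¹))⁻¹ := by
    have h := Rm hM h2 (x⁻¹ * z) x (y * z⁻¹)
    rwa [assoc_congr2 (crel_assoc h2 x y z⁻¹) (x⁻¹ * z) x] at h
  have e9 : assoc (x⁻¹ * z) x (y * z⁻¹) = (assoc x z (y * z⁻¹))⁻¹ := by
    have h := Lm hM h2 (x⁻¹ * z) x (y * z⁻¹)
    rw [assoc_congr2 s9 x (y * z⁻¹)] at h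
    rw [h, inv_inv']
  have e10 : assoc x z (y * z⁻¹) = (assoc x y z)⁻¹ := by
    have h := Rm hM h2 x z (y * z⁻¹)
    rw [assoc_congr2 s10 x z] at h
    rw [h, inv_inv']
  rw [e1, e2, inv_inv', e3, e4, inv_inv', e5, e6, inv_inv', e7, e8, inv_inv',
    e9, e10, inv_inv']

end IPLoop

open IPLoop in
/-- In a Moufang loop of class at most 2, the κ-isotope product satisfies
`(cκ)(κ⁻¹d) = (cd)·[c,κ,d]`. -/
theorem stmt18 {L : Type*} [IPLoop L] (hM : IsMoufang L) (h2 : ClassTwo L)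
    (c d κ : L) :
    (c * κ) * (κ⁻¹ * d) = (c * d) * assoc c κ d := by
  have h1 : (c * κ) * (κ⁻¹ * d) = (c * (κ * (κ⁻¹ * d))) * assoc c κ (κ⁻¹ * d) :=
    mul_mul_assoc c κ (κ⁻¹ * d)
  have hu : κ * (κ⁻¹ * d) = d := inv_mul_cancel_left' κ d
  have h3 : assoc c κ (κ * (κ⁻¹ * d)) = assoc c κ (κ⁻¹ * d) :=
    assoc_absorb hM h2 c κ (κ⁻¹ * d)
  rw [hu] at h3
  rw [h1, hu, ← h3]
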